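/- There exist only finitely many inequivalent node classifiers on a bounded graph class definable in FOC2 of quantifier depth at most n; quantitatively, their number (and the parse-tree size needed to represent each) is at most f(n), where f(0) = 1000·2^{2^{2(m1+m2)}} and f(k+1) = 2^{2^{2(N+1)·f(k)}}, with m1 = |P1|, m2 = |P2|, and N the bound on the number of nodes. -/

import Mathlib

inductive Var : Type
  | x | y
deriving DecidableEq

structure FOCGraph (P1 P2 : Type) where
  V : Type
  [fintV : Fintype V]
  [decV : DecidableEq V]
  unary : P1 → V → Prop
  rel : P2 → V → V → Prop
  [decU : ∀ p, DecidablePred (unary p)]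
  [decR : ∀ r, DecidableRel (rel r)]

attribute [instance] FOCGraph.fintV FOCGraph.decV FOCGraph.decU FOCGraph.decR

inductive FOC2 (P1 P2 : Type) : Type
  | tru : FOC2 P1 P2
  | atom : P1 → Var → FOC2 P1 P2
  | rel : P2 → Var → Var → FOC2 P1 P2
  | and : FOC2 P1 P2 → FOC2 P1 P2 → FOC2 P1 P2
  | or : FOC2 P1 P2 → FOC2 P1 P2 → FOC2 P1 P2
  | not : FOC2 P1 P2 → FOC2 P1 P2
  | exge : ℕ → Var → FOC2 P1 P2 → FOC2 P1 P2

variable {P1 P2 : Type}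

/-- Satisfaction of a `FOC2` formula in a multi-relational graph under an assignment. -/
def FOCGraph.sat (G : FOCGraph P1 P2) : (Var → G.V) → FOC2 P1 P2 → Prop
  | _, .tru => True
  | σ, .atom p v => G.unary p (σ v)
  | σ, .rel r u w => G.rel r (σ u) (σ w)
  | σ, .and φ ψ => G.sat σ φ ∧ G.sat σ ψ
  | σ, .or φ ψ => G.sat σ φ ∨ G.sat σ ψ
  | σ, .not φ => ¬ G.sat σ φ
  | σ, .exge n v φ => ∃ S : Finset G.V, S.card = n ∧ ∀ a ∈ S, G.sat (Function.update σ v a) φ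

/-- Quantifier depth. -/
def FOC2.depth : FOC2 P1 P2 → ℕ
  | .tru => 0
  | .atom _ _ => 0
  | .rel _ _ _ => 0
  | .and φ ψ => max φ.depth ψ.depth
  | .or φ ψ => max φ.depth ψ.depth
  | .not φ => φ.depth
  | .exge _ _ φ => φ.depth + 1

/-- All counting thresholds are at most `m`. -/
def FOC2.thresholdsLe (m : ℕ) : FOC2 P1 P2 → Prop
  | .tru => True
  | .atom _ _ => True
  | .rel _ _ _ => True
  | .and φ ψ => φ.thresholdsLe m ∧ ψ.thresholdsLe m
  | .or φ ψ => φ.thresholdsLe m ∧ ψ.thresholdsLe m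
  | .not φ => φ.thresholdsLe m
  | .exge n _ φ => n ≤ m ∧ φ.thresholdsLe m

/-- Free variables. -/
def FOC2.freeVars : FOC2 P1 P2 → Finset Var
  | .tru => ∅
  | .atom _ v => {v}
  | .rel _ u w => {u, w}
  | .and φ ψ => φ.freeVars ∪ ψ.freeVars
  | .or φ ψ => φ.freeVars ∪ ψ.freeVars
  | .not φ => φ.freeVars
  | .exge _ v φ => φ.freeVars \ {v}

/-- Parse-tree size. -/
def FOC2.size : FOC2 P1 P2 → ℕ
  | .tru => 1
  | .atom _ _ => 1
  | .rel _ _ _ => 1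
  | .and φ ψ => φ.size + ψ.size + 1
  | .or φ ψ => φ.size + ψ.size + 1
  | .not φ => φ.size + 1
  | .exge _ _ φ => φ.size + 1


/-- The tower bound `f`: `f 0 = 1000·2^(2^(2(m1+m2)))`,
`f (k+1) = 2^(2^(2(N+1)·f k))`. -/
def fbound (m1 m2 N : ℕ) : ℕ → ℕ
  | 0 => 1000 * 2 ^ 2 ^ (2 * (m1 + m2))
  | k + 1 => 2 ^ 2 ^ (2 * (N + 1) * fbound m1 m2 N k)


-- ===== auxiliary development =====

attribute [local instance] Classical.propDecidable

instance : Fintype Var := ⟨{Var.x, Var.y}, by rintro (_|_) <;> simp⟩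

lemma var_card : Fintype.card Var = 2 := rfl

abbrev GAtom (P1 P2 : Type) : Type := (P1 → Var → Bool) × (P2 → Var → Var → Bool)

def Typ (P1 P2 : Type) (N : ℕ) : ℕ → Type
  | 0 => GAtom P1 P2
  | k+1 => GAtom P1 P2 × (Typ P1 P2 N k → Fin (N+1)) × (Typ P1 P2 N k → Fin (N+1))

section
variable [Fintype P1] [Fintype P2]

noncomputable instance typFinty (N : ℕ) : ∀ k, Fintype (Typ P1 P2 N k)
  | 0 => inferInstanceAs (Fintype (GAtom P1 P2))
  | k+1 => letI := typFinty N k; inferInstanceAs (Fintype (GAtom P1 P2 × _ × _))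

def atomOf (G : FOCGraph P1 P2) (σ : Var → G.V) : GAtom P1 P2 :=
  (fun p v => decide (G.unary p (σ v)), fun r u w => decide (G.rel r (σ u) (σ w)))

noncomputable def tp (N : ℕ) (G : FOCGraph P1 P2) : ∀ k, (Var → G.V) → Typ P1 P2 N k
  | 0, σ => atomOf G σ
  | k+1, σ =>
    (atomOf G σ,
     fun s => ⟨min ((Finset.univ.filter fun c =>
        tp N G k (Function.update σ Var.x c) = s).card) N, Nat.lt_succ_of_le (min_le_right _ _)⟩,
     fun s => ⟨min ((Finset.univ.filter fun c =>
        tp N G k (Function.update σ Var.y c) = s).card) N, Nat.lt_succ_of_le (min_le_right _ _)⟩)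

noncomputable def cnt (N : ℕ) (G : FOCGraph P1 P2) (k : ℕ) (σ : Var → G.V) (v : Var)
    (s : Typ P1 P2 N k) : ℕ :=
  (Finset.univ.filter fun c => tp N G k (Function.update σ v c) = s).card

lemma tp_succ (N : ℕ) (G : FOCGraph P1 P2) (k : ℕ) (σ : Var → G.V) :
    tp N G (k+1) σ =
      (atomOf G σ,
       fun s => ⟨min (cnt N G k σ Var.x s) N, Nat.lt_succ_of_le (min_le_right _ _)⟩,
       fun s => ⟨min (cnt N G k σ Var.y s) N, Nat.lt_succ_of_le (min_le_right _ _)⟩) := rfl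

lemma cnt_le (N : ℕ) (G : FOCGraph P1 P2) (hN : Fintype.card G.V ≤ N) (k : ℕ) (σ : Var → G.V)
    (v : Var) (s : Typ P1 P2 N k) : cnt N G k σ v s ≤ N :=
  le_trans (le_trans (Finset.card_filter_le _ _) (le_of_eq (Finset.card_univ))) hN

end
set_option linter.unusedSectionVars false

def conj : List (FOC2 P1 P2) → FOC2 P1 P2 := fun l => l.foldr .and .tru
def disj : List (FOC2 P1 P2) → FOC2 P1 P2 := fun l => l.foldr .or (.not .tru)

lemma sat_conj (G : FOCGraph P1 P2) (σ : Var → G.V) (l : List (FOC2 P1 P2)) :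
    G.sat σ (conj l) ↔ ∀ φ ∈ l, G.sat σ φ := by
  induction l with
  | nil => simp [conj, FOCGraph.sat]
  | cons a l ih =>
    rw [show conj (a :: l) = FOC2.and a (conj l) from rfl]
    simp only [FOCGraph.sat, ih, List.mem_cons]
    constructor
    · rintro ⟨h1, h2⟩ φ (rfl | hφ)
      · exact h1
      · exact h2 _ hφ
    · intro h
      exact ⟨h _ (Or.inl rfl), fun φ hφ => h _ (Or.inr hφ)⟩

lemma sat_disj (G : FOCGraph P1 P2) (σ : Var → G.V) (l : List (FOC2 P1 P2)) :
    G.sat σ (disj l) ↔ ∃ φ ∈ l, G.sat σ φ := by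
  induction l with
  | nil => simp [disj, FOCGraph.sat]
  | cons a l ih =>
    rw [show disj (a :: l) = FOC2.or a (disj l) from rfl]
    simp only [FOCGraph.sat, ih, List.mem_cons]
    constructor
    · rintro (h | ⟨φ, hφ, h⟩)
      · exact ⟨a, Or.inl rfl, h⟩
      · exact ⟨φ, Or.inr hφ, h⟩
    · rintro ⟨φ, (rfl | hφ), h⟩
      · exact Or.inl h
      · exact Or.inr ⟨φ, hφ, h⟩

lemma size_conj (l : List (FOC2 P1 P2)) :
    (conj l).size = (l.map (fun φ => φ.size + 1)).sum + 1 := by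
  induction l with
  | nil => simp [conj, FOC2.size]
  | cons a l ih =>
    rw [show conj (a :: l) = FOC2.and a (conj l) from rfl]
    simp only [FOC2.size, List.map_cons, List.sum_cons, ih]
    omega

lemma size_disj (l : List (FOC2 P1 P2)) :
    (disj l).size = (l.map (fun φ => φ.size + 1)).sum + 2 := by
  induction l with
  | nil => simp [disj, FOC2.size]
  | cons a l ih =>
    rw [show disj (a :: l) = FOC2.or a (disj l) from rfl]
    simp only [FOC2.size, List.map_cons, List.sum_cons, ih]
    omega

def lit (b : Bool) (φ : FOC2 P1 P2) : FOC2 P1 P2 := if b then φ else .not φ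

lemma size_lit (b : Bool) (φ : FOC2 P1 P2) : (lit b φ).size ≤ φ.size + 1 := by
  cases b <;> simp [lit, FOC2.size]

lemma sat_lit (G : FOCGraph P1 P2) (σ : Var → G.V) (b : Bool) (φ : FOC2 P1 P2) :
    G.sat σ (lit b φ) ↔ (G.sat σ φ ↔ b = true) := by
  cases b <;> simp [lit, FOCGraph.sat]

lemma sat_lit_decide (G : FOCGraph P1 P2) (σ : Var → G.V) (b : Bool) (φ : FOC2 P1 P2)
    (q : Prop) [Decidable q] (hq : G.sat σ φ ↔ q) :
    G.sat σ (lit b φ) ↔ decide q = b := by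
  rw [sat_lit, hq]
  cases b <;> simp

section
variable [Fintype P1] [Fintype P2]

lemma sat_lit_atom (G : FOCGraph P1 P2) (σ : Var → G.V) (b : Bool) (p : P1) (v : Var) :
    G.sat σ (lit b (.atom p v)) ↔ decide (G.unary p (σ v)) = b :=
  sat_lit_decide G σ b _ (G.unary p (σ v)) (by simp [FOCGraph.sat])

lemma sat_lit_rel (G : FOCGraph P1 P2) (σ : Var → G.V) (b : Bool) (r : P2) (u w : Var) :
    G.sat σ (lit b (.rel r u w)) ↔ decide (G.rel r (σ u) (σ w)) = b :=
  sat_lit_decide G σ b _ (G.rel r (σ u) (σ w)) (by simp [FOCGraph.sat])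

noncomputable def atomFormula (a : GAtom P1 P2) : FOC2 P1 P2 :=
  conj (((Finset.univ : Finset P1).toList.flatMap fun p =>
      [lit (a.1 p .x) (.atom p .x), lit (a.1 p .y) (.atom p .y)])
    ++ ((Finset.univ : Finset P2).toList.flatMap fun r =>
      [lit (a.2 r .x .x) (.rel r .x .x), lit (a.2 r .x .y) (.rel r .x .y),
       lit (a.2 r .y .x) (.rel r .y .x), lit (a.2 r .y .y) (.rel r .y .y)]))

lemma sat_atomFormula (G : FOCGraph P1 P2) (σ : Var → G.V) (a : GAtom P1 P2) :
    G.sat σ (atomFormula a) ↔ atomOf G σ = a := by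
  unfold atomFormula
  rw [sat_conj]
  constructor
  · intro h
    have hu : ∀ p v, decide (G.unary p (σ v)) = a.1 p v := by
      intro p v
      have hm : (lit (a.1 p v) (.atom p v) : FOC2 P1 P2) ∈
          (((Finset.univ : Finset P1).toList.flatMap fun p =>
            [lit (a.1 p .x) (.atom p .x), lit (a.1 p .y) (.atom p .y)])) := by
        rw [List.mem_flatMap]
        exact ⟨p, by simp, by cases v <;> simp⟩
      have := h _ (List.mem_append_left _ hm)
      rwa [sat_lit_atom] at this
    have hb : ∀ r u w, decide (G.rel r (σ u) (σ w)) = a.2 r u w := by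
      intro r u w
      have hm : (lit (a.2 r u w) (.rel r u w) : FOC2 P1 P2) ∈
          ((Finset.univ : Finset P2).toList.flatMap fun r =>
            [lit (a.2 r .x .x) (.rel r .x .x), lit (a.2 r .x .y) (.rel r .x .y),
             lit (a.2 r .y .x) (.rel r .y .x), lit (a.2 r .y .y) (.rel r .y .y)]) := by
        rw [List.mem_flatMap]
        exact ⟨r, by simp, by cases u <;> cases w <;> simp⟩
      have := h _ (List.mem_append_right _ hm)
      rwa [sat_lit_rel] at this
    exact Prod.ext (by funext p v; exact hu p v) (by funext r u w; exact hb r u w)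
  · intro h φ hφ
    rw [List.mem_append] at hφ
    rcases hφ with hφ | hφ
    · rw [List.mem_flatMap] at hφ
      obtain ⟨p, -, hφ⟩ := hφ
      have hu : ∀ v, a.1 p v = decide (G.unary p (σ v)) := by
        intro v; rw [← h]; rfl
      simp only [List.mem_cons, List.not_mem_nil, or_false] at hφ
      rcases hφ with rfl | rfl <;>
        · rw [sat_lit_atom]
          exact (hu _).symm
    · rw [List.mem_flatMap] at hφ
      obtain ⟨r, -, hφ⟩ := hφ
      have hb : ∀ u w, a.2 r u w = decide (G.rel r (σ u) (σ w)) := by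
        intro u w; rw [← h]; rfl
      simp only [List.mem_cons, List.not_mem_nil, or_false] at hφ
      rcases hφ with rfl | rfl | rfl | rfl <;>
        · rw [sat_lit_rel]
          exact (hb _ _).symm

lemma size_atomFormula (a : GAtom P1 P2) :
    (atomFormula a).size ≤ 6 * Fintype.card P1 + 12 * Fintype.card P2 + 1 := by
  unfold atomFormula
  rw [size_conj]
  set l1 := ((Finset.univ : Finset P1).toList.flatMap fun p =>
      [lit (a.1 p .x) (.atom p .x), lit (a.1 p .y) (.atom p .y)]) with hl1
  set l2 := ((Finset.univ : Finset P2).toList.flatMap fun r =>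
      [lit (a.2 r .x .x) (.rel r .x .x), lit (a.2 r .x .y) (.rel r .x .y),
       lit (a.2 r .y .x) (.rel r .y .x), lit (a.2 r .y .y) (.rel r .y .y)]) with hl2
  have hsz : ∀ m ∈ ((l1 ++ l2).map (fun φ => φ.size + 1)), m ≤ 3 := by
    intro m hm
    rw [List.mem_map] at hm
    obtain ⟨φ, hφ, rfl⟩ := hm
    rw [List.mem_append] at hφ
    have : φ.size ≤ 2 := by
      rcases hφ with hφ | hφ
      · rw [hl1, List.mem_flatMap] at hφ
        obtain ⟨p, -, hφ⟩ := hφ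
        simp only [List.mem_cons, List.not_mem_nil, or_false] at hφ
        rcases hφ with rfl | rfl <;> exact le_trans (size_lit _ _) (by simp [FOC2.size])
      · rw [hl2, List.mem_flatMap] at hφ
        obtain ⟨r, -, hφ⟩ := hφ
        simp only [List.mem_cons, List.not_mem_nil, or_false] at hφ
        rcases hφ with rfl | rfl | rfl | rfl <;>
          exact le_trans (size_lit _ _) (by simp [FOC2.size])
    omega
  have hlen := List.sum_le_card_nsmul _ 3 hsz
  rw [List.length_map, List.length_append] at hlen
  have h1 : l1.length = 2 * Fintype.card P1 := by
    rw [hl1, List.length_flatMap]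
    simp [Finset.length_toList, mul_comm, List.map_const]
  have h2 : l2.length = 4 * Fintype.card P2 := by
    rw [hl2, List.length_flatMap]
    simp [Finset.length_toList, mul_comm, List.map_const]
  rw [h1, h2] at hlen
  simp only [smul_eq_mul] at hlen
  omega
end
section
variable [Fintype P1] [Fintype P2]

lemma sat_exge (G : FOCGraph P1 P2) (σ : Var → G.V) (m : ℕ) (v : Var) (φ : FOC2 P1 P2) :
    G.sat σ (.exge m v φ) ↔ m ≤ (Finset.univ.filter fun c => G.sat (Function.update σ v c) φ).card := by
  constructor
  · rintro ⟨S, hcard, hS⟩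
    calc m = S.card := hcard.symm
    _ ≤ _ := Finset.card_le_card fun c hc => Finset.mem_filter.2 ⟨Finset.mem_univ _, hS c hc⟩
  · intro h
    obtain ⟨t, hsub, hcard⟩ := Finset.exists_subset_card_eq h
    exact ⟨t, hcard, fun c hc => (Finset.mem_filter.1 (hsub hc)).2⟩

def pinF (N : ℕ) (v : Var) (c : ℕ) (φ : FOC2 P1 P2) : FOC2 P1 P2 :=
  if c < N then .and (.exge c v φ) (.not (.exge (c+1) v φ)) else .exge N v φ

lemma size_pinF (N : ℕ) (v : Var) (c : ℕ) (φ : FOC2 P1 P2) :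
    (pinF N v c φ).size ≤ 2 * φ.size + 4 := by
  unfold pinF
  split <;> simp [FOC2.size] <;> omega

lemma sat_pinF (N : ℕ) (G : FOCGraph P1 P2) (σ : Var → G.V) (v : Var) (c : ℕ) (φ : FOC2 P1 P2)
    (hc : c ≤ N)
    (hcnt : (Finset.univ.filter fun d => G.sat (Function.update σ v d) φ).card ≤ N) :
    G.sat σ (pinF N v c φ) ↔
      (Finset.univ.filter fun d => G.sat (Function.update σ v d) φ).card = c := by
  by_cases h : c < N
  · rw [show pinF N v c φ = .and (.exge c v φ) (.not (.exge (c+1) v φ)) from if_pos h]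
    rw [show (FOCGraph.sat G σ (.and (.exge c v φ) (.not (.exge (c+1) v φ)))) ↔
      (G.sat σ (.exge c v φ) ∧ ¬ G.sat σ (.exge (c+1) v φ)) from Iff.rfl]
    rw [sat_exge, sat_exge]
    omega
  · rw [show pinF N v c φ = .exge N v φ from if_neg h]
    rw [sat_exge]
    omega

noncomputable def xi (N : ℕ) : ∀ k, Typ P1 P2 N k → FOC2 P1 P2
  | 0, t => atomFormula t
  | k+1, t =>
    .and (atomFormula t.1)
      (.and (conj ((Finset.univ : Finset (Typ P1 P2 N k)).toList.map fun s =>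
              pinF N Var.x ((t.2.1 s : Fin (N+1)) : ℕ) (xi N k s)))
            (conj ((Finset.univ : Finset (Typ P1 P2 N k)).toList.map fun s =>
              pinF N Var.y ((t.2.2 s : Fin (N+1)) : ℕ) (xi N k s))))

lemma sat_xi (N : ℕ) (G : FOCGraph P1 P2) (hN : Fintype.card G.V ≤ N) :
    ∀ (k : ℕ) (σ : Var → G.V) (t : Typ P1 P2 N k),
      G.sat σ (xi N k t) ↔ tp N G k σ = t := by
  intro k
  induction k with
  | zero =>
    intro σ t
    exact sat_atomFormula G σ t
  | succ k ih =>
    intro σ t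
    have hpin : ∀ (v : Var) (cf : Typ P1 P2 N k → Fin (N+1)) (s : Typ P1 P2 N k),
        (G.sat σ (pinF N v ((cf s : Fin (N+1)) : ℕ) (xi N k s)) ↔
          cnt N G k σ v s = (cf s : ℕ)) := by
      intro v cf s
      have hfe : (Finset.univ.filter fun d => G.sat (Function.update σ v d) (xi N k s)) =
          (Finset.univ.filter fun d => tp N G k (Function.update σ v d) = s) :=
        Finset.filter_congr fun d _ => by rw [ih]
      rw [sat_pinF N G σ v _ _ (Nat.le_of_lt_succ (cf s).isLt)
        (by rw [hfe]; exact cnt_le N G hN k σ v s), hfe]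
      rfl
    rw [show (G.sat σ (xi N (k+1) t)) ↔
        (G.sat σ (atomFormula t.1) ∧
         G.sat σ (conj ((Finset.univ : Finset (Typ P1 P2 N k)).toList.map fun s =>
            pinF N Var.x ((t.2.1 s : Fin (N+1)) : ℕ) (xi N k s))) ∧
         G.sat σ (conj ((Finset.univ : Finset (Typ P1 P2 N k)).toList.map fun s =>
            pinF N Var.y ((t.2.2 s : Fin (N+1)) : ℕ) (xi N k s)))) from Iff.rfl]
    rw [sat_atomFormula, sat_conj, sat_conj]
    constructor
    · rintro ⟨h0, h1, h2⟩
      rw [tp_succ]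
      refine Prod.ext h0 (Prod.ext ?_ ?_)
      · funext s
        have h := (hpin Var.x t.2.1 s).1 (h1 _ (List.mem_map_of_mem (by simp)))
        apply Fin.ext
        show min (cnt N G k σ Var.x s) N = ((t.2.1 s : Fin (N+1)) : ℕ)
        rw [min_eq_left (cnt_le N G hN k σ Var.x s), h]
      · funext s
        have h := (hpin Var.y t.2.2 s).1 (h2 _ (List.mem_map_of_mem (by simp)))
        apply Fin.ext
        show min (cnt N G k σ Var.y s) N = ((t.2.2 s : Fin (N+1)) : ℕ)
        rw [min_eq_left (cnt_le N G hN k σ Var.y s), h]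
    · rintro rfl
      rw [tp_succ]
      refine ⟨rfl, ?_, ?_⟩
      · intro φ hφ
        rw [List.mem_map] at hφ
        obtain ⟨s, -, rfl⟩ := hφ
        rw [hpin Var.x _ s]
        show cnt N G k σ Var.x s = min (cnt N G k σ Var.x s) N
        rw [min_eq_left (cnt_le N G hN k σ Var.x s)]
      · intro φ hφ
        rw [List.mem_map] at hφ
        obtain ⟨s, -, rfl⟩ := hφ
        rw [hpin Var.y _ s]
        show cnt N G k σ Var.y s = min (cnt N G k σ Var.y s) N
        rw [min_eq_left (cnt_le N G hN k σ Var.y s)]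

end
section
variable [Fintype P1] [Fintype P2]

def atomPartT {N : ℕ} : ∀ k, Typ P1 P2 N k → GAtom P1 P2
  | 0, t => t
  | _+1, t => t.1

lemma atomPartT_tp (N : ℕ) (G : FOCGraph P1 P2) (k : ℕ) (σ : Var → G.V) :
    atomPartT k (tp N G k σ) = atomOf G σ := by
  cases k <;> rfl

lemma tp_inv (N : ℕ) : ∀ (φ : FOC2 P1 P2) (k : ℕ), φ.depth ≤ k →
    ∀ (G G' : FOCGraph P1 P2) (σ : Var → G.V) (σ' : Var → G'.V),
      Fintype.card G.V ≤ N → Fintype.card G'.V ≤ N →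
      tp N G k σ = tp N G' k σ' → (G.sat σ φ ↔ G'.sat σ' φ) := by
  intro φ
  induction φ with
  | tru =>
    intro k _ G G' σ σ' _ _ _
    simp [FOCGraph.sat]
  | atom p v =>
    intro k _ G G' σ σ' _ _ h
    have ha : atomOf G σ = atomOf G' σ' := by
      rw [← atomPartT_tp N G k σ, ← atomPartT_tp N G' k σ', h]
    have := congrFun (congrFun (congrArg Prod.fst ha) p) v
    simp only [atomOf, decide_eq_decide] at this
    exact this
  | rel r u w =>
    intro k _ G G' σ σ' _ _ h
    have ha : atomOf G σ = atomOf G' σ' := by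
      rw [← atomPartT_tp N G k σ, ← atomPartT_tp N G' k σ', h]
    have := congrFun (congrFun (congrFun (congrArg Prod.snd ha) r) u) w
    simp only [atomOf, decide_eq_decide] at this
    exact this
  | and φ ψ ihφ ihψ =>
    intro k hd G G' σ σ' hG hG' h
    rw [FOC2.depth, max_le_iff] at hd
    exact and_congr (ihφ k hd.1 G G' σ σ' hG hG' h) (ihψ k hd.2 G G' σ σ' hG hG' h)
  | or φ ψ ihφ ihψ =>
    intro k hd G G' σ σ' hG hG' h
    rw [FOC2.depth, max_le_iff] at hd
    exact or_congr (ihφ k hd.1 G G' σ σ' hG hG' h) (ihψ k hd.2 G G' σ σ' hG hG' h)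
  | not φ ihφ =>
    intro k hd G G' σ σ' hG hG' h
    exact not_congr (ihφ k hd G G' σ σ' hG hG' h)
  | exge m v ψ ihψ =>
    intro k hd G G' σ σ' hG hG' h
    rw [FOC2.depth] at hd
    obtain ⟨j, rfl⟩ : ∃ j, k = j + 1 := ⟨k - 1, by omega⟩
    have hdj : ψ.depth ≤ j := by omega
    -- the set of depth-j types at which ψ holds (in some bounded graph)
    set S : Finset (Typ P1 P2 N j) := Finset.univ.filter (fun s =>
      ∃ (H : FOCGraph P1 P2) (τ : Var → H.V),
        Fintype.card H.V ≤ N ∧ tp N H j τ = s ∧ H.sat τ ψ) with hS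
    have key : ∀ (K : FOCGraph P1 P2) (ρ : Var → K.V), Fintype.card K.V ≤ N →
        ∀ c : K.V, K.sat (Function.update ρ v c) ψ ↔
          tp N K j (Function.update ρ v c) ∈ S := by
      intro K ρ hK c
      constructor
      · intro hsat
        rw [hS, Finset.mem_filter]
        exact ⟨Finset.mem_univ _, K, Function.update ρ v c, hK, rfl, hsat⟩
      · intro hmem
        rw [hS, Finset.mem_filter] at hmem
        obtain ⟨-, H, τ, hH, htp, hsat⟩ := hmem
        exact (ihψ j hdj K H (Function.update ρ v c) τ hK hH (htp.symm ▸ rfl)).2 hsat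
    have cardEq : ∀ (K : FOCGraph P1 P2) (ρ : Var → K.V), Fintype.card K.V ≤ N →
        (Finset.univ.filter fun c => K.sat (Function.update ρ v c) ψ).card =
          ∑ s ∈ S, cnt N K j ρ v s := by
      intro K ρ hK
      have h1 : (Finset.univ.filter fun c => K.sat (Function.update ρ v c) ψ) =
          (Finset.univ.filter fun c => tp N K j (Function.update ρ v c) ∈ S) :=
        Finset.filter_congr fun c _ => by rw [key K ρ hK c]
      rw [h1]
      rw [Finset.card_eq_sum_card_fiberwise
        (f := fun c => tp N K j (Function.update ρ v c)) (t := S)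
        (s := Finset.univ.filter fun c => tp N K j (Function.update ρ v c) ∈ S)
        (fun c hc => (Finset.mem_filter.1 hc).2)]
      refine Finset.sum_congr rfl fun s hs => ?_
      congr 1
      ext c
      simp only [Finset.mem_filter, Finset.mem_univ, true_and]
      constructor
      · rintro ⟨-, h2⟩; exact h2
      · intro h2; exact ⟨h2 ▸ hs, h2⟩
    have hcnts : ∀ s : Typ P1 P2 N j, cnt N G j σ v s = cnt N G' j σ' v s := by
      intro s
      have h21 : tp N G (j+1) σ = tp N G' (j+1) σ' := h
      rw [tp_succ, tp_succ] at h21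
      have hmin : min (cnt N G j σ v s) N = min (cnt N G' j σ' v s) N := by
        cases v
        · exact congrArg Fin.val (congrFun (congrArg (fun z => z.2.1) h21) s)
        · exact congrArg Fin.val (congrFun (congrArg (fun z => z.2.2) h21) s)
      rwa [min_eq_left (cnt_le N G hG j σ v s), min_eq_left (cnt_le N G' hG' j σ' v s)] at hmin
    rw [sat_exge, sat_exge, cardEq G σ hG, cardEq G' σ' hG',
      Finset.sum_congr rfl (fun s _ => hcnts s)]

end
section
variable [Fintype P1] [Fintype P2]

def consistentA (a : GAtom P1 P2) : Prop :=
  (∀ p v, a.1 p v = a.1 p Var.x) ∧ (∀ r u w, a.2 r u w = a.2 r Var.x Var.x)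

noncomputable def CTypes (N n : ℕ) : Finset (Typ P1 P2 N n) :=
  Finset.univ.filter (fun t => consistentA (atomPartT n t))

noncomputable def reps (N n : ℕ) : List (FOC2 P1 P2) :=
  ((CTypes (P1 := P1) (P2 := P2) N n).powerset.toList).map
    (fun T => disj (T.toList.map (xi N n)))

lemma const_mem_CTypes (N n : ℕ) (G : FOCGraph P1 P2) (v : G.V) :
    tp N G n (fun _ => v) ∈ CTypes (P1 := P1) (P2 := P2) N n := by
  rw [CTypes, Finset.mem_filter]
  refine ⟨Finset.mem_univ _, ?_⟩
  rw [atomPartT_tp]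
  exact ⟨fun p w => rfl, fun r u w => rfl⟩

lemma covering (N n : ℕ) (φ : FOC2 P1 P2) (hd : φ.depth ≤ n) :
    ∃ ψ ∈ reps (P1 := P1) (P2 := P2) N n,
      ∀ G : FOCGraph P1 P2, Fintype.card G.V ≤ N →
        ∀ v : G.V, (G.sat (fun _ => v) φ ↔ G.sat (fun _ => v) ψ) := by
  set T : Finset (Typ P1 P2 N n) := (CTypes (P1 := P1) (P2 := P2) N n).filter (fun t =>
    ∃ (G : FOCGraph P1 P2) (v : G.V), Fintype.card G.V ≤ N ∧
      tp N G n (fun _ => v) = t ∧ G.sat (fun _ => v) φ) with hT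
  refine ⟨disj (T.toList.map (xi N n)), ?_, ?_⟩
  · rw [reps]
    exact List.mem_map_of_mem (Finset.mem_toList.2 (Finset.mem_powerset.2
      (Finset.filter_subset _ _)))
  · intro G hG v
    constructor
    · intro h
      rw [sat_disj]
      refine ⟨xi N n (tp N G n (fun _ => v)), List.mem_map_of_mem (Finset.mem_toList.2 ?_),
        (sat_xi N G hG n _ _).2 rfl⟩
      rw [hT, Finset.mem_filter]
      exact ⟨const_mem_CTypes N n G v, G, v, hG, rfl, h⟩
    · intro h
      rw [sat_disj] at h
      obtain ⟨ψ', hm, hs⟩ := h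
      rw [List.mem_map] at hm
      obtain ⟨t, ht, rfl⟩ := hm
      have htp := (sat_xi N G hG n _ t).1 hs
      rw [Finset.mem_toList, hT, Finset.mem_filter] at ht
      obtain ⟨-, G'', v'', hG'', htp'', hφ⟩ := ht
      exact (tp_inv N φ n hd G'' G (fun _ => v'') (fun _ => v) hG'' hG
        (by rw [htp'', htp])).1 hφ

end
def tauB (m1 m2 N : ℕ) : ℕ → ℕ
  | 0 => 2 ^ (2 * m1 + 4 * m2)
  | k + 1 => 2 ^ (2 * m1 + 4 * m2) * ((N + 1) ^ tauB m1 m2 N k * (N + 1) ^ tauB m1 m2 N k)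

def szB (m1 m2 N : ℕ) : ℕ → ℕ
  | 0 => 6 * m1 + 12 * m2 + 1
  | k + 1 => (6 * m1 + 12 * m2 + 1) + 2 * (tauB m1 m2 N k * (2 * szB m1 m2 N k + 5) + 1) + 2

def ctB (m1 m2 N : ℕ) : ℕ → ℕ
  | 0 => 2 ^ (m1 + m2)
  | k + 1 => 2 ^ (m1 + m2) * ((N + 1) ^ tauB m1 m2 N k * (N + 1) ^ tauB m1 m2 N k)

section Arith

lemma succ_le_two_pow (a : ℕ) : a + 1 ≤ 2 ^ a := Nat.lt_two_pow_self (n := a)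

lemma le_two_pow' (a : ℕ) : a ≤ 2 ^ a := le_of_lt (Nat.lt_two_pow_self (n := a))

lemma two_mul_le_two_pow (a : ℕ) : 2 * a ≤ 2 ^ a := by
  cases a with
  | zero => simp
  | succ t =>
    have := succ_le_two_pow t
    rw [pow_succ]
    omega

lemma sq_le_two_pow (a : ℕ) : a * a ≤ 2 ^ (2 * a) := by
  have h := le_two_pow' a
  calc a * a ≤ 2 ^ a * 2 ^ a := Nat.mul_le_mul h h
  _ = 2 ^ (2 * a) := by rw [← pow_add]; ring_nf

variable (m1 m2 N : ℕ)

lemma f_ge : ∀ k, 1000 * 2 ^ 2 ^ (2 * (m1 + m2)) ≤ fbound m1 m2 N k := by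
  intro k
  induction k with
  | zero => exact le_refl _
  | succ k ih =>
    set s := m1 + m2
    set A := fbound m1 m2 N k with hA
    show 1000 * 2 ^ 2 ^ (2 * s) ≤ 2 ^ 2 ^ (2 * (N + 1) * A)
    have h0 : 2 ^ (2 * s) ≤ 2 ^ 2 ^ (2 * s) :=
      Nat.pow_le_pow_right (by norm_num) (le_two_pow' _)
    have h1 : 2 ^ (2 * s) + 10 ≤ 2 ^ (2 * (N + 1) * A) := by
      have h2 : 2 * (N + 1) * A + 1 ≤ 2 ^ (2 * (N + 1) * A) := succ_le_two_pow _
      have h3 : 2 * A ≤ 2 * (N + 1) * A := by nlinarith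
      have h4 : 1000 * 2 ^ 2 ^ (2 * s) ≤ A := ih
      have h5 : (1 : ℕ) ≤ 2 ^ (2 * s) := Nat.one_le_two_pow
      omega
    calc 1000 * 2 ^ 2 ^ (2 * s) ≤ 1024 * 2 ^ 2 ^ (2 * s) := by omega
    _ = 2 ^ (10 + 2 ^ (2 * s)) := by rw [pow_add]; norm_num
    _ ≤ 2 ^ 2 ^ (2 * (N + 1) * A) := Nat.pow_le_pow_right (by norm_num) (by omega)

lemma f_ge' (k : ℕ) : 1000 * (2 * (m1 + m2) + 2) ≤ fbound m1 m2 N k := by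
  have h := f_ge m1 m2 N k
  have h1 : 2 * (m1 + m2) + 2 ≤ 2 ^ 2 ^ (2 * (m1 + m2)) := by
    have h2 := succ_le_two_pow (2 * (m1 + m2))
    have h3 := succ_le_two_pow (2 ^ (2 * (m1 + m2)))
    omega
  calc 1000 * (2 * (m1 + m2) + 2) ≤ 1000 * 2 ^ 2 ^ (2 * (m1 + m2)) := by
        exact Nat.mul_le_mul_left _ h1
  _ ≤ _ := h

lemma tauB_le_f : ∀ k, tauB m1 m2 N k ≤ fbound m1 m2 N k := by
  intro k
  induction k with
  | zero =>
    show 2 ^ (2 * m1 + 4 * m2) ≤ 1000 * 2 ^ 2 ^ (2 * (m1 + m2))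
    have h1 : 2 * m1 + 4 * m2 ≤ 2 ^ (2 * (m1 + m2)) := by
      have := two_mul_le_two_pow (2 * (m1 + m2))
      omega
    calc 2 ^ (2 * m1 + 4 * m2) ≤ 2 ^ 2 ^ (2 * (m1 + m2)) :=
          Nat.pow_le_pow_right (by norm_num) h1
    _ ≤ 1000 * 2 ^ 2 ^ (2 * (m1 + m2)) := Nat.le_mul_of_pos_left _ (by norm_num)
  | succ k ih =>
    set A := fbound m1 m2 N k with hA
    have hbig := f_ge' m1 m2 N k
    show 2 ^ (2 * m1 + 4 * m2) * ((N + 1) ^ tauB m1 m2 N k * (N + 1) ^ tauB m1 m2 N k)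
      ≤ 2 ^ 2 ^ (2 * (N + 1) * A)
    have hN1 : (N + 1) ^ tauB m1 m2 N k ≤ 2 ^ (N * A) := by
      calc (N + 1) ^ tauB m1 m2 N k ≤ (2 ^ N) ^ tauB m1 m2 N k :=
            Nat.pow_le_pow_left (succ_le_two_pow N) _
      _ = 2 ^ (N * tauB m1 m2 N k) := by rw [← pow_mul]
      _ ≤ 2 ^ (N * A) := Nat.pow_le_pow_right (by norm_num) (Nat.mul_le_mul_left _ ih)
    calc 2 ^ (2 * m1 + 4 * m2) * ((N + 1) ^ tauB m1 m2 N k * (N + 1) ^ tauB m1 m2 N k)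
        ≤ 2 ^ (2 * m1 + 4 * m2) * (2 ^ (N * A) * 2 ^ (N * A)) := by
          exact Nat.mul_le_mul_left _ (Nat.mul_le_mul hN1 hN1)
    _ = 2 ^ (2 * m1 + 4 * m2 + (N * A + N * A)) := by rw [← pow_add, ← pow_add]
    _ ≤ 2 ^ (2 * (N + 1) * A) := Nat.pow_le_pow_right (by norm_num) (by nlinarith)
    _ ≤ 2 ^ 2 ^ (2 * (N + 1) * A) := Nat.pow_le_pow_right (by norm_num) (le_two_pow' _)

lemma szB_le_f : ∀ k, szB m1 m2 N k ≤ fbound m1 m2 N k := by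
  intro k
  induction k with
  | zero =>
    show 6 * m1 + 12 * m2 + 1 ≤ 1000 * 2 ^ 2 ^ (2 * (m1 + m2))
    have := f_ge' m1 m2 N 0
    have : 1000 * (2 * (m1 + m2) + 2) ≤ 1000 * 2 ^ 2 ^ (2 * (m1 + m2)) := by
      have h1 : 2 * (m1 + m2) + 2 ≤ 2 ^ 2 ^ (2 * (m1 + m2)) := by
        have h2 := succ_le_two_pow (2 * (m1 + m2))
        have h3 := succ_le_two_pow (2 ^ (2 * (m1 + m2)))
        omega
      exact Nat.mul_le_mul_left _ h1
    omega
  | succ k ih =>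
    set A := fbound m1 m2 N k with hA
    have hbig := f_ge' m1 m2 N k
    have htau := tauB_le_f m1 m2 N k
    show (6 * m1 + 12 * m2 + 1) + 2 * (tauB m1 m2 N k * (2 * szB m1 m2 N k + 5) + 1) + 2
      ≤ 2 ^ 2 ^ (2 * (N + 1) * A)
    have hB0 : 6 * m1 + 12 * m2 + 1 ≤ A := by omega
    have h1 : (6 * m1 + 12 * m2 + 1) + 2 * (tauB m1 m2 N k * (2 * szB m1 m2 N k + 5) + 1) + 2
        ≤ 16 * (A * A) := by nlinarith
    have h2 : 16 * (A * A) ≤ 2 ^ (2 * A + 4) := by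
      have := sq_le_two_pow A
      calc 16 * (A * A) ≤ 16 * 2 ^ (2 * A) := by omega
      _ = 2 ^ (2 * A + 4) := by rw [pow_add]; ring
    have h3 : 2 * A + 4 ≤ 2 ^ (2 * A) := by
      have := two_mul_le_two_pow (2 * A)
      omega
    have h4 : (2 : ℕ) ^ (2 * A) ≤ 2 ^ (2 * (N + 1) * A) :=
      Nat.pow_le_pow_right (by norm_num) (by nlinarith)
    calc _ ≤ 2 ^ (2 * A + 4) := le_trans h1 h2
    _ ≤ 2 ^ 2 ^ (2 * A) := Nat.pow_le_pow_right (by norm_num) h3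
    _ ≤ 2 ^ 2 ^ (2 * (N + 1) * A) := Nat.pow_le_pow_right (by norm_num)
        (Nat.pow_le_pow_right (by norm_num) (by nlinarith))

lemma main_len : ∀ n, 2 ^ ctB m1 m2 N n ≤ fbound m1 m2 N n := by
  intro n
  cases n with
  | zero =>
    show 2 ^ 2 ^ (m1 + m2) ≤ 1000 * 2 ^ 2 ^ (2 * (m1 + m2))
    calc 2 ^ 2 ^ (m1 + m2) ≤ 2 ^ 2 ^ (2 * (m1 + m2)) :=
          Nat.pow_le_pow_right (by norm_num)
            (Nat.pow_le_pow_right (by norm_num) (by omega))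
    _ ≤ _ := Nat.le_mul_of_pos_left _ (by norm_num)
  | succ k =>
    set A := fbound m1 m2 N k with hA
    have hbig := f_ge' m1 m2 N k
    have htau := tauB_le_f m1 m2 N k
    show 2 ^ (2 ^ (m1 + m2) * ((N + 1) ^ tauB m1 m2 N k * (N + 1) ^ tauB m1 m2 N k))
      ≤ 2 ^ 2 ^ (2 * (N + 1) * A)
    apply Nat.pow_le_pow_right (by norm_num)
    have hN1 : (N + 1) ^ tauB m1 m2 N k ≤ 2 ^ (N * A) := by
      calc (N + 1) ^ tauB m1 m2 N k ≤ (2 ^ N) ^ tauB m1 m2 N k :=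
            Nat.pow_le_pow_left (succ_le_two_pow N) _
      _ = 2 ^ (N * tauB m1 m2 N k) := by rw [← pow_mul]
      _ ≤ 2 ^ (N * A) := Nat.pow_le_pow_right (by norm_num) (Nat.mul_le_mul_left _ htau)
    calc 2 ^ (m1 + m2) * ((N + 1) ^ tauB m1 m2 N k * (N + 1) ^ tauB m1 m2 N k)
        ≤ 2 ^ (m1 + m2) * (2 ^ (N * A) * 2 ^ (N * A)) :=
          Nat.mul_le_mul_left _ (Nat.mul_le_mul hN1 hN1)
    _ = 2 ^ (m1 + m2 + (N * A + N * A)) := by rw [← pow_add, ← pow_add]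
    _ ≤ 2 ^ (2 * (N + 1) * A) := Nat.pow_le_pow_right (by norm_num) (by nlinarith)

lemma main_size : ∀ n, ctB m1 m2 N n * (szB m1 m2 N n + 1) + 2 ≤ fbound m1 m2 N n := by
  intro n
  cases n with
  | zero =>
    show 2 ^ (m1 + m2) * ((6 * m1 + 12 * m2 + 1) + 1) + 2 ≤ 1000 * 2 ^ 2 ^ (2 * (m1 + m2))
    set s := m1 + m2
    have h1 : 2 ^ 2 ^ (2 * s) ≥ 2 ^ (2 * s) :=
      Nat.pow_le_pow_right (by norm_num) (le_two_pow' _)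
    have h2 : (2 : ℕ) ^ (2 * s) = 2 ^ s * 2 ^ s := by rw [← pow_add]; ring_nf
    have h3 : 2 ^ s ≥ s + 1 := succ_le_two_pow s
    have h4 : (6 * m1 + 12 * m2 + 1) + 1 ≤ 12 * s + 2 := by omega
    have h5 : (1:ℕ) ≤ 2 ^ s := Nat.one_le_two_pow
    calc 2 ^ s * ((6 * m1 + 12 * m2 + 1) + 1) + 2 ≤ 2 ^ s * (12 * s + 2) + 2 :=
          Nat.add_le_add_right (Nat.mul_le_mul_left _ h4) 2
    _ ≤ 2 ^ s * (1000 * (s + 1)) := by nlinarith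
    _ ≤ 2 ^ s * (1000 * 2 ^ s) := by
          exact Nat.mul_le_mul_left _ (Nat.mul_le_mul_left _ h3)
    _ = 1000 * (2 ^ s * 2 ^ s) := by ring
    _ = 1000 * 2 ^ (2 * s) := by rw [h2]
    _ ≤ 1000 * 2 ^ 2 ^ (2 * s) := Nat.mul_le_mul_left _ h1
  | succ k =>
    set A := fbound m1 m2 N k with hA
    have hbig := f_ge' m1 m2 N k
    have htau := tauB_le_f m1 m2 N k
    have hsz := szB_le_f m1 m2 N k
    -- ctB (k+1) ≤ 2 ^ (m1 + m2 + 2 * N * A)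
    have hct : ctB m1 m2 N (k + 1) ≤ 2 ^ (m1 + m2 + (N * A + N * A)) := by
      show 2 ^ (m1 + m2) * ((N + 1) ^ tauB m1 m2 N k * (N + 1) ^ tauB m1 m2 N k) ≤ _
      have hN1 : (N + 1) ^ tauB m1 m2 N k ≤ 2 ^ (N * A) := by
        calc (N + 1) ^ tauB m1 m2 N k ≤ (2 ^ N) ^ tauB m1 m2 N k :=
              Nat.pow_le_pow_left (succ_le_two_pow N) _
        _ = 2 ^ (N * tauB m1 m2 N k) := by rw [← pow_mul]
        _ ≤ 2 ^ (N * A) := Nat.pow_le_pow_right (by norm_num) (Nat.mul_le_mul_left _ htau)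
      calc 2 ^ (m1 + m2) * ((N + 1) ^ tauB m1 m2 N k * (N + 1) ^ tauB m1 m2 N k)
          ≤ 2 ^ (m1 + m2) * (2 ^ (N * A) * 2 ^ (N * A)) :=
            Nat.mul_le_mul_left _ (Nat.mul_le_mul hN1 hN1)
      _ = 2 ^ (m1 + m2 + (N * A + N * A)) := by rw [← pow_add, ← pow_add]
    -- szB (k+1) + 1 ≤ 2 ^ (2A + 5)
    have hsz1 : szB m1 m2 N (k + 1) + 1 ≤ 2 ^ (2 * A + 5) := by
      have h1 : szB m1 m2 N (k + 1) + 1 ≤ 32 * (A * A) := by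
        show (6 * m1 + 12 * m2 + 1) + 2 * (tauB m1 m2 N k * (2 * szB m1 m2 N k + 5) + 1) + 2 + 1
          ≤ 32 * (A * A)
        have hB0 : 6 * m1 + 12 * m2 + 1 ≤ A := by omega
        nlinarith
      have h2 := sq_le_two_pow A
      calc szB m1 m2 N (k + 1) + 1 ≤ 32 * 2 ^ (2 * A) := by omega
      _ = 2 ^ (2 * A + 5) := by rw [pow_add]; ring
    have hcomb : ctB m1 m2 N (k + 1) * (szB m1 m2 N (k + 1) + 1) + 2
        ≤ 2 ^ (m1 + m2 + (N * A + N * A) + (2 * A + 5)) + 2 := by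
      have := Nat.mul_le_mul hct hsz1
      rw [← pow_add] at this
      exact Nat.add_le_add_right this 2
    have hfin : 2 ^ (m1 + m2 + (N * A + N * A) + (2 * A + 5)) + 2
        ≤ 2 ^ 2 ^ (2 * (N + 1) * A) := by
      have hM : m1 + m2 + (N * A + N * A) + (2 * A + 5) + 1 ≤ 2 * (2 * (N + 1) * A) := by
        nlinarith
      have hpow : 2 * (2 * (N + 1) * A) ≤ 2 ^ (2 * (N + 1) * A) := two_mul_le_two_pow _
      have h5 : (2 : ℕ) ≤ 2 ^ (m1 + m2 + (N * A + N * A) + (2 * A + 5)) := by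
        calc (2 : ℕ) = 2 ^ 1 := rfl
        _ ≤ _ := Nat.pow_le_pow_right (by norm_num) (by omega)
      calc 2 ^ (m1 + m2 + (N * A + N * A) + (2 * A + 5)) + 2
          ≤ 2 ^ (m1 + m2 + (N * A + N * A) + (2 * A + 5)) * 2 := by omega
      _ = 2 ^ (m1 + m2 + (N * A + N * A) + (2 * A + 5) + 1) := by rw [pow_succ]
      _ ≤ 2 ^ 2 ^ (2 * (N + 1) * A) := Nat.pow_le_pow_right (by norm_num) (le_trans hM hpow)
    exact le_trans hcomb hfin

end Arith
section
variable [Fintype P1] [Fintype P2]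

lemma card_GAtom_le :
    Fintype.card (GAtom P1 P2) ≤ 2 ^ (2 * Fintype.card P1 + 4 * Fintype.card P2) := by
  have h1 : Fintype.card (GAtom P1 P2) =
      Fintype.card (P1 → Var → Bool) * Fintype.card (P2 → Var → Var → Bool) :=
    Fintype.card_prod _ _
  have h2 : Fintype.card (P1 → Var → Bool) = (2 ^ 2) ^ Fintype.card P1 := by
    rw [Fintype.card_fun, Fintype.card_fun, Fintype.card_bool, var_card]
  have h3 : Fintype.card (P2 → Var → Var → Bool) = ((2 ^ 2) ^ 2) ^ Fintype.card P2 := by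
    rw [Fintype.card_fun, Fintype.card_fun, Fintype.card_fun, Fintype.card_bool, var_card]
  rw [h1, h2, h3, ← pow_mul, ← pow_mul, ← pow_mul, ← pow_add]
  apply Nat.pow_le_pow_right (by norm_num)
  omega

lemma card_typ_le (N : ℕ) :
    ∀ k, Fintype.card (Typ P1 P2 N k) ≤ tauB (Fintype.card P1) (Fintype.card P2) N k := by
  intro k
  induction k with
  | zero =>
    exact le_trans
      (Fintype.card_le_of_injective (fun t => (t : GAtom P1 P2)) (fun a b h => h))
      card_GAtom_le
  | succ k ih =>
    have h1 : Fintype.card (Typ P1 P2 N (k+1)) ≤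
        Fintype.card (GAtom P1 P2 × (Typ P1 P2 N k → Fin (N+1)) × (Typ P1 P2 N k → Fin (N+1))) :=
      Fintype.card_le_of_injective (fun t => t) (fun a b h => h)
    have hf : Fintype.card (Typ P1 P2 N k → Fin (N+1)) = (N+1) ^ Fintype.card (Typ P1 P2 N k) := by
      rw [Fintype.card_fun, Fintype.card_fin]
    have h2 : Fintype.card (GAtom P1 P2 × (Typ P1 P2 N k → Fin (N+1)) × (Typ P1 P2 N k → Fin (N+1)))
        = Fintype.card (GAtom P1 P2) *
          ((N+1) ^ Fintype.card (Typ P1 P2 N k) * (N+1) ^ Fintype.card (Typ P1 P2 N k)) := by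
      rw [Fintype.card_prod (GAtom P1 P2)
        ((Typ P1 P2 N k → Fin (N+1)) × (Typ P1 P2 N k → Fin (N+1))),
        Fintype.card_prod (Typ P1 P2 N k → Fin (N+1)) (Typ P1 P2 N k → Fin (N+1)), hf]
    refine le_trans h1 (le_trans (le_of_eq h2) ?_)
    show _ ≤ 2 ^ (2 * Fintype.card P1 + 4 * Fintype.card P2) *
      ((N + 1) ^ tauB (Fintype.card P1) (Fintype.card P2) N k *
       (N + 1) ^ tauB (Fintype.card P1) (Fintype.card P2) N k)
    have hp : (N+1) ^ Fintype.card (Typ P1 P2 N k) ≤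
        (N+1) ^ tauB (Fintype.card P1) (Fintype.card P2) N k :=
      Nat.pow_le_pow_right (by omega) ih
    exact Nat.mul_le_mul card_GAtom_le (Nat.mul_le_mul hp hp)

lemma size_xi_le (N : ℕ) :
    ∀ k (t : Typ P1 P2 N k),
      (xi N k t).size ≤ szB (Fintype.card P1) (Fintype.card P2) N k := by
  intro k
  induction k with
  | zero => exact fun t => size_atomFormula t
  | succ k ih =>
    intro t
    have hconj : ∀ (v : Var) (cf : Typ P1 P2 N k → Fin (N+1)),
        (conj ((Finset.univ : Finset (Typ P1 P2 N k)).toList.map fun s =>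
          pinF N v ((cf s : Fin (N+1)) : ℕ) (xi N k s))).size ≤
        tauB (Fintype.card P1) (Fintype.card P2) N k *
          (2 * szB (Fintype.card P1) (Fintype.card P2) N k + 5) + 1 := by
      intro v cf
      rw [size_conj, List.map_map]
      have hb : ∀ m ∈ (Finset.univ : Finset (Typ P1 P2 N k)).toList.map
          ((fun φ => φ.size + 1) ∘ fun s => pinF N v ((cf s : Fin (N+1)) : ℕ) (xi N k s)),
          m ≤ 2 * szB (Fintype.card P1) (Fintype.card P2) N k + 5 := by
        intro m hm
        rw [List.mem_map] at hm
        obtain ⟨s, -, rfl⟩ := hm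
        have h1 := size_pinF N v ((cf s : Fin (N+1)) : ℕ) (xi N k s)
        have h2 := ih s
        simp only [Function.comp]
        omega
      have := List.sum_le_card_nsmul _ _ hb
      rw [List.length_map, Finset.length_toList, Finset.card_univ, smul_eq_mul] at this
      have hcard := card_typ_le (P1 := P1) (P2 := P2) N k
      have : ((Finset.univ : Finset (Typ P1 P2 N k)).toList.map
          ((fun φ => φ.size + 1) ∘ fun s => pinF N v ((cf s : Fin (N+1)) : ℕ) (xi N k s))).sum ≤
          tauB (Fintype.card P1) (Fintype.card P2) N k *
            (2 * szB (Fintype.card P1) (Fintype.card P2) N k + 5) := by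
        refine le_trans this (Nat.mul_le_mul_right _ hcard)
      omega
    show ((atomFormula t.1).and (.and _ _)).size ≤ _
    have e : ∀ (a b c : FOC2 P1 P2), (a.and (b.and c)).size = a.size + (b.size + c.size + 1) + 1 :=
      fun a b c => rfl
    rw [e]
    have h0 := size_atomFormula (P1 := P1) (P2 := P2) t.1
    have h1 := hconj Var.x t.2.1
    have h2 := hconj Var.y t.2.2
    show _ ≤ (6 * Fintype.card P1 + 12 * Fintype.card P2 + 1) +
      2 * (tauB (Fintype.card P1) (Fintype.card P2) N k *
        (2 * szB (Fintype.card P1) (Fintype.card P2) N k + 5) + 1) + 2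
    omega

lemma card_CTypes_le (N : ℕ) :
    ∀ n, (CTypes (P1 := P1) (P2 := P2) N n).card ≤
      ctB (Fintype.card P1) (Fintype.card P2) N n := by
  intro n
  have hg0 : ∀ (a b : GAtom P1 P2), consistentA a → consistentA b →
      ((fun p => a.1 p Var.x, fun r => a.2 r Var.x Var.x) :
        (P1 → Bool) × (P2 → Bool)) = (fun p => b.1 p Var.x, fun r => b.2 r Var.x Var.x) →
      a = b := by
    intro a b ha hb h
    have h1 : ∀ p, a.1 p Var.x = b.1 p Var.x := fun p => congrFun (congrArg Prod.fst h) p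
    have h2 : ∀ r, a.2 r Var.x Var.x = b.2 r Var.x Var.x :=
      fun r => congrFun (congrArg Prod.snd h) r
    refine Prod.ext ?_ ?_
    · funext p v
      rw [ha.1 p v, hb.1 p v, h1]
    · funext r u w
      rw [ha.2 r u w, hb.2 r u w, h2]
  cases n with
  | zero =>
    have hle : (CTypes (P1 := P1) (P2 := P2) N 0).card ≤
        Fintype.card ((P1 → Bool) × (P2 → Bool)) := by
      rw [← Finset.card_univ]
      refine Finset.card_le_card_of_injOn
        (fun t => ((fun p => (t : GAtom P1 P2).1 p Var.x, fun r => (t : GAtom P1 P2).2 r Var.x Var.x) :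
          (P1 → Bool) × (P2 → Bool)))
        (fun a _ => Finset.mem_univ _) ?_
      intro a ha b hb h
      rw [Finset.mem_coe, CTypes, Finset.mem_filter] at ha hb
      exact hg0 _ _ ha.2 hb.2 h
    refine le_trans hle ?_
    rw [Fintype.card_prod, Fintype.card_fun, Fintype.card_fun, Fintype.card_bool, ← pow_add]
    exact le_refl _
  | succ k =>
    have hle : (CTypes (P1 := P1) (P2 := P2) N (k+1)).card ≤
        Fintype.card (((P1 → Bool) × (P2 → Bool)) ×
          (Typ P1 P2 N k → Fin (N+1)) × (Typ P1 P2 N k → Fin (N+1))) := by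
      rw [← Finset.card_univ]
      refine Finset.card_le_card_of_injOn
        (fun t => (((fun p => (t : Typ P1 P2 N (k+1)).1.1 p Var.x,
            fun r => (t : Typ P1 P2 N (k+1)).1.2 r Var.x Var.x) : (P1 → Bool) × (P2 → Bool)),
          (t : Typ P1 P2 N (k+1)).2.1, (t : Typ P1 P2 N (k+1)).2.2))
        (fun a _ => Finset.mem_univ _) ?_
      intro a ha b hb h
      rw [Finset.mem_coe, CTypes, Finset.mem_filter] at ha hb
      have h1 := congrArg Prod.fst h
      have h2 := congrArg (fun z => z.2.1) h
      have h3 := congrArg (fun z => z.2.2) h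
      simp only at h1 h2 h3
      have ha2 : consistentA (a.1) := ha.2
      have hb2 : consistentA (b.1) := hb.2
      have hfst : a.1 = b.1 := hg0 _ _ ha2 hb2 h1
      refine Prod.ext hfst (Prod.ext h2 h3)
    refine le_trans hle ?_
    have hf : Fintype.card (Typ P1 P2 N k → Fin (N+1)) = (N+1) ^ Fintype.card (Typ P1 P2 N k) := by
      rw [Fintype.card_fun, Fintype.card_fin]
    have hf2 : Fintype.card ((P1 → Bool) × (P2 → Bool)) =
        2 ^ (Fintype.card P1 + Fintype.card P2) := by
      rw [Fintype.card_prod ((P1 → Bool)) ((P2 → Bool)), Fintype.card_fun, Fintype.card_fun,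
        Fintype.card_bool, ← pow_add]
    have h2 : Fintype.card (((P1 → Bool) × (P2 → Bool)) ×
        (Typ P1 P2 N k → Fin (N+1)) × (Typ P1 P2 N k → Fin (N+1)))
        = 2 ^ (Fintype.card P1 + Fintype.card P2) *
          ((N+1) ^ Fintype.card (Typ P1 P2 N k) * (N+1) ^ Fintype.card (Typ P1 P2 N k)) := by
      rw [Fintype.card_prod ((P1 → Bool) × (P2 → Bool))
        ((Typ P1 P2 N k → Fin (N+1)) × (Typ P1 P2 N k → Fin (N+1))),
        Fintype.card_prod (Typ P1 P2 N k → Fin (N+1)) (Typ P1 P2 N k → Fin (N+1)), hf, hf2]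
    rw [h2]
    show _ ≤ 2 ^ (Fintype.card P1 + Fintype.card P2) *
      ((N + 1) ^ tauB (Fintype.card P1) (Fintype.card P2) N k *
       (N + 1) ^ tauB (Fintype.card P1) (Fintype.card P2) N k)
    have hp : (N+1) ^ Fintype.card (Typ P1 P2 N k) ≤
        (N+1) ^ tauB (Fintype.card P1) (Fintype.card P2) N k :=
      Nat.pow_le_pow_right (by omega) (card_typ_le N k)
    exact Nat.mul_le_mul_left _ (Nat.mul_le_mul hp hp)

lemma reps_length (N n : ℕ) :
    (reps (P1 := P1) (P2 := P2) N n).length =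
      2 ^ (CTypes (P1 := P1) (P2 := P2) N n).card := by
  rw [reps, List.length_map, Finset.length_toList, Finset.card_powerset]

lemma reps_size (N n : ℕ) (ψ : FOC2 P1 P2) (hψ : ψ ∈ reps (P1 := P1) (P2 := P2) N n) :
    ψ.size ≤ (CTypes (P1 := P1) (P2 := P2) N n).card *
      (szB (Fintype.card P1) (Fintype.card P2) N n + 1) + 2 := by
  rw [reps, List.mem_map] at hψ
  obtain ⟨T, hT, rfl⟩ := hψ
  rw [Finset.mem_toList, Finset.mem_powerset] at hT
  rw [size_disj, List.map_map]
  have hb : ∀ m ∈ T.toList.map ((fun φ => φ.size + 1) ∘ xi N n),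
      m ≤ szB (Fintype.card P1) (Fintype.card P2) N n + 1 := by
    intro m hm
    rw [List.mem_map] at hm
    obtain ⟨t, -, rfl⟩ := hm
    have := size_xi_le (P1 := P1) (P2 := P2) N n t
    simp only [Function.comp]
    omega
  have hsum := List.sum_le_card_nsmul _ _ hb
  rw [List.length_map, Finset.length_toList, smul_eq_mul] at hsum
  have hcard : T.card ≤ (CTypes (P1 := P1) (P2 := P2) N n).card := Finset.card_le_card hT
  have : (T.toList.map ((fun φ => φ.size + 1) ∘ xi N n)).sum ≤
      (CTypes (P1 := P1) (P2 := P2) N n).card *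
        (szB (Fintype.card P1) (Fintype.card P2) N n + 1) :=
    le_trans hsum (Nat.mul_le_mul_right _ hcard)
  omega

end


/-- On the class of graphs with at most `N` nodes, the `FOC2` node classifiers of
quantifier depth at most `n` number at most `f n`, each representable with parse-tree
size at most `f n`. -/
theorem stmt14 {P1 P2 : Type} [Fintype P1] [Fintype P2] (N n : ℕ) :
    ∃ Φ : List (FOC2 P1 P2),
      Φ.length ≤ fbound (Fintype.card P1) (Fintype.card P2) N n ∧
      (∀ ψ ∈ Φ, ψ.size ≤ fbound (Fintype.card P1) (Fintype.card P2) N n) ∧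
      ∀ φ : FOC2 P1 P2, φ.depth ≤ n → φ.freeVars ⊆ {Var.x} →
        ∃ ψ ∈ Φ, ∀ G : FOCGraph P1 P2, Fintype.card G.V ≤ N →
          ∀ v : G.V, (G.sat (fun _ => v) φ ↔ G.sat (fun _ => v) ψ) := by
  refine ⟨reps (P1 := P1) (P2 := P2) N n, ?_, ?_, ?_⟩
  · rw [reps_length]
    calc 2 ^ (CTypes (P1 := P1) (P2 := P2) N n).card
        ≤ 2 ^ ctB (Fintype.card P1) (Fintype.card P2) N n :=
          Nat.pow_le_pow_right (by norm_num) (card_CTypes_le N n)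
    _ ≤ _ := main_len _ _ _ n
  · intro ψ hψ
    refine le_trans (reps_size N n ψ hψ) ?_
    refine le_trans ?_ (main_size (Fintype.card P1) (Fintype.card P2) N n)
    have := card_CTypes_le (P1 := P1) (P2 := P2) N n
    exact Nat.add_le_add_right (Nat.mul_le_mul_right _ this) 2
  · intro φ hd _
    exact covering N n φ hd
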